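/- arXiv:1411.0455 — 3 statements merged into one kernel-verified Lean document; each statement's English description precedes it below -/
import Mathlib

section
/- Let r ≥ 1 be an integer and a, b ≥ 0 real numbers. Define the genus γ = (r-1)a + b + 2 and dimension d = r + r(r-1)a/2 + rb, and set q = -((r-1)/2)·d·a² + ((r-1)/r)·a·d·(d+r) + 2d(d+r)/r. Then q/4 < γ²·d. -/
/-- For an irreducible bounded symmetric domain of rank `r ≥ 1` with numerical
invariants `a, b ≥ 0`, genus `γ = (r-1)a + b + 2`, dimension
`d = r + r(r-1)a/2 + rb`, and Engliš's quantity `q`, one has `q/4 < γ² d`. -/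
theorem stmt0 (r : ℕ) (hr : 1 ≤ r) (a b : ℝ) (ha : 0 ≤ a) (hb : 0 ≤ b)
    (γ d q : ℝ)
    (hγ : γ = ((r : ℝ) - 1) * a + b + 2)
    (hd : d = (r : ℝ) + (r : ℝ) * ((r : ℝ) - 1) * a / 2 + (r : ℝ) * b)
    (hq : q = -(((r : ℝ) - 1) / 2) * d * a ^ 2
        + (((r : ℝ) - 1) / (r : ℝ)) * a * d * (d + (r : ℝ))
        + 2 * d * (d + (r : ℝ)) / (r : ℝ)) :
    q / 4 < γ ^ 2 * d := by
  have hR : (1:ℝ) ≤ (r:ℝ) := by exact_mod_cast hr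
  have hR0 : (0:ℝ) < (r:ℝ) := by linarith
  have h1 : (0:ℝ) ≤ (r:ℝ) - 1 := by linarith
  set s : ℝ := 2 + ((r:ℝ) - 1) * a / 2 + b with hs
  have hds : d + (r:ℝ) = (r:ℝ) * s := by rw [hd, hs]; ring
  have hq' : q = d * (-(((r:ℝ) - 1) / 2) * a ^ 2 + ((r:ℝ) - 1) * a * s + 2 * s) := by
    rw [hq, hds]; field_simp
  have hd0 : 0 < d := by
    rw [hd]
    nlinarith [mul_nonneg (mul_nonneg hR0.le h1) ha, mul_nonneg hR0.le hb]
  have core : (-(((r:ℝ) - 1) / 2) * a ^ 2 + ((r:ℝ) - 1) * a * s + 2 * s) / 4 < γ ^ 2 := by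
    rw [hγ, hs]
    nlinarith [mul_nonneg h1 ha, mul_nonneg (mul_nonneg h1 ha) hb, sq_nonneg (((r:ℝ)-1)*a),
      mul_nonneg (mul_nonneg h1 ha) (mul_nonneg h1 ha), sq_nonneg b, mul_nonneg hb hb]
  have := mul_lt_mul_of_pos_left core hd0
  rw [hq']
  nlinarith [this]
end

section
/- Let r ≥ 1 be an integer, a, b ≥ 0 real numbers, γ = (r-1)a + b + 2, d = r + r(r-1)a/2 + rb, q = -((r-1)/2)·d·a² + ((r-1)/r)·a·d·(d+r) + 2d(d+r)/r. Define a₁ = -(1/2)γd and a₂ = (1/8)γ²d² - (1/6)γ²d + (1/24)q. Then a₂ - (1/2)·a₁² < 0. -/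
/-- For the first two TYZ coefficients `a₁ = -γd/2` and
`a₂ = γ²d²/8 - γ²d/6 + q/24` of an irreducible bounded symmetric domain
`(Ω, (1/γ) g_B)`, one has `a₂ - a₁²/2 < 0`. -/
theorem stmt2 (r : ℕ) (hr : 1 ≤ r) (a b : ℝ) (ha : 0 ≤ a) (hb : 0 ≤ b)
    (γ d q a₁ a₂ : ℝ)
    (hγ : γ = ((r : ℝ) - 1) * a + b + 2)
    (hd : d = (r : ℝ) + (r : ℝ) * ((r : ℝ) - 1) * a / 2 + (r : ℝ) * b)
    (hq : q = -(((r : ℝ) - 1) / 2) * d * a ^ 2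
        + (((r : ℝ) - 1) / (r : ℝ)) * a * d * (d + (r : ℝ))
        + 2 * d * (d + (r : ℝ)) / (r : ℝ))
    (ha₁ : a₁ = -(1 / 2) * γ * d)
    (ha₂ : a₂ = (1 / 8) * γ ^ 2 * d ^ 2 - (1 / 6) * γ ^ 2 * d + (1 / 24) * q) :
    a₂ - (1 / 2) * a₁ ^ 2 < 0 := by
  have hx : (1 : ℝ) ≤ (r : ℝ) := by exact_mod_cast hr
  have hx0 : (0 : ℝ) < (r : ℝ) := by linarith
  set x : ℝ := (r : ℝ)
  -- q without division
  have hs : d + x = x * (2 + (x - 1) * a / 2 + b) := by rw [hd]; ring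
  have hq' : q = -((x - 1) / 2) * d * a ^ 2
      + (x - 1) * a * d * (2 + (x - 1) * a / 2 + b)
      + 2 * d * (2 + (x - 1) * a / 2 + b) := by
    rw [hq, hs]; field_simp
  have hd0 : 0 < d := by
    have h1 : 0 ≤ x * (x - 1) * a / 2 := by
      have := mul_nonneg (mul_nonneg hx0.le (by linarith : (0:ℝ) ≤ x - 1)) ha
      linarith
    have h2 : 0 ≤ x * b := by positivity
    rw [hd]; linarith
  have hsa : 0 ≤ (x - 1) * a := by
    have := mul_nonneg (by linarith : (0:ℝ) ≤ x - 1) ha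
    linarith
  have hqle : q ≤ γ ^ 2 * d := by
    set t : ℝ := (x - 1) * a with ht
    have key : (t + 2) * (2 + t / 2 + b) ≤ γ ^ 2 := by
      rw [hγ]
      nlinarith [sq_nonneg t, sq_nonneg b, mul_nonneg hsa hb]
    have h2 : 0 ≤ 2 + t / 2 + b := by linarith
    have h3 : d * ((t + 2) * (2 + t / 2 + b)) ≤ d * γ ^ 2 :=
      mul_le_mul_of_nonneg_left key hd0.le
    have h4 : 0 ≤ d * (t * a) := mul_nonneg hd0.le (mul_nonneg hsa ha)
    have h5 : q = d * ((t + 2) * (2 + t / 2 + b)) - d * (t * a) / 2 := by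
      rw [hq', ht]; ring
    linarith
  have hγ0 : 0 < γ := by rw [hγ]; nlinarith
  have hγd : 0 < γ ^ 2 * d := by positivity
  have key : a₂ - (1 / 2) * a₁ ^ 2 = (1 / 24) * q - (1 / 6) * (γ ^ 2 * d) := by
    rw [ha₂, ha₁]; ring
  rw [key]
  linarith
end

section
/- The Kähler metric on ℂ² \ {0} with potential Φ(z) = |z|² + log|z|² (|z|² = |z₁|² + |z₂|²) has zero scalar curvature. -/
noncomputable section

/-- Wirtinger derivative `∂f/∂zᵢ` of a function `f : ℂ² → ℂ`. -/
def dz (i : Fin 2) (f : (Fin 2 → ℂ) → ℂ) (z : Fin 2 → ℂ) : ℂ :=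
  (1 / 2) * (fderiv ℝ f z (Pi.single i 1)
    - Complex.I * fderiv ℝ f z (Pi.single i Complex.I))

/-- Wirtinger derivative `∂f/∂z̄ᵢ` of a function `f : ℂ² → ℂ`. -/
def dzbar (i : Fin 2) (f : (Fin 2 → ℂ) → ℂ) (z : Fin 2 → ℂ) : ℂ :=
  (1 / 2) * (fderiv ℝ f z (Pi.single i 1)
    + Complex.I * fderiv ℝ f z (Pi.single i Complex.I))

/-- Simanca's Kähler potential `Φ(z) = |z|² + log |z|²` on `ℂ² \ {0}`. -/
def simancaPotential (z : Fin 2 → ℂ) : ℂ :=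
  ((‖z 0‖ ^ 2 + ‖z 1‖ ^ 2 : ℝ) : ℂ)
    + Complex.log ((‖z 0‖ ^ 2 + ‖z 1‖ ^ 2 : ℝ) : ℂ)

/-- The real-linear map `v ↦ ∑ aᵢ vᵢ + bᵢ conj vᵢ`. -/
def Wir (a b : Fin 2 → ℂ) : (Fin 2 → ℂ) →L[ℝ] ℂ :=
  ∑ i : Fin 2, (a i • (ContinuousLinearMap.proj i : (Fin 2 → ℂ) →L[ℝ] ℂ)
    + b i • ((Complex.conjCLE.toContinuousLinearMap).comp
        (ContinuousLinearMap.proj i : (Fin 2 → ℂ) →L[ℝ] ℂ)))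

lemma Wir_apply (a b : Fin 2 → ℂ) (v : Fin 2 → ℂ) :
    Wir a b v = a 0 * v 0 + b 0 * (starRingEnd ℂ) (v 0)
      + (a 1 * v 1 + b 1 * (starRingEnd ℂ) (v 1)) := by
  simp [Wir, Fin.sum_univ_two, Complex.conjCLE_apply]

def HasW (f : (Fin 2 → ℂ) → ℂ) (z : Fin 2 → ℂ) (a b : Fin 2 → ℂ) : Prop :=
  HasFDerivAt f (Wir a b) z

lemma hasW_of {f : (Fin 2 → ℂ) → ℂ} {z : Fin 2 → ℂ} {L : (Fin 2 → ℂ) →L[ℝ] ℂ}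
    {a b : Fin 2 → ℂ} (h : HasFDerivAt f L z) (hL : ∀ v, L v = Wir a b v) :
    HasW f z a b := by
  have : L = Wir a b := ContinuousLinearMap.ext hL
  unfold HasW
  rwa [this] at h

lemma HasW.dz_eq {f z a b} (h : HasW f z a b) (i : Fin 2) : dz i f z = a i := by
  unfold dz
  rw [h.fderiv]
  fin_cases i <;>
    simp [Wir_apply, Pi.single_apply, Complex.conj_I] <;> ring_nf <;>
      simp [Complex.I_sq] <;> ring

lemma HasW.dzbar_eq {f z a b} (h : HasW f z a b) (i : Fin 2) : dzbar i f z = b i := by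
  unfold dzbar
  rw [h.fderiv]
  fin_cases i <;>
    simp [Wir_apply, Pi.single_apply, Complex.conj_I] <;> ring_nf <;>
      simp [Complex.I_sq] <;> ring

lemma hasW_const (c : ℂ) (z : Fin 2 → ℂ) : HasW (fun _ => c) z 0 0 :=
  hasW_of (hasFDerivAt_const c z) (by intro v; simp [Wir_apply])

lemma hasW_coord (j : Fin 2) (z : Fin 2 → ℂ) :
    HasW (fun w => w j) z (Pi.single j 1) 0 :=
  hasW_of ((ContinuousLinearMap.proj j : (Fin 2 → ℂ) →L[ℝ] ℂ).hasFDerivAt)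
    (by intro v; fin_cases j <;> simp [Wir_apply, Pi.single_apply])

lemma hasW_conj_coord (j : Fin 2) (z : Fin 2 → ℂ) :
    HasW (fun w => (starRingEnd ℂ) (w j)) z 0 (Pi.single j 1) :=
  hasW_of (((Complex.conjCLE.toContinuousLinearMap).comp
      (ContinuousLinearMap.proj j : (Fin 2 → ℂ) →L[ℝ] ℂ)).hasFDerivAt)
    (by intro v; fin_cases j <;> simp [Wir_apply, Pi.single_apply, Complex.conjCLE_apply])

lemma HasW.add {f g z af bf ag bg} (hf : HasW f z af bf) (hg : HasW g z ag bg) :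
    HasW (fun w => f w + g w) z (af + ag) (bf + bg) :=
  hasW_of (HasFDerivAt.add hf hg) (by intro v; simp [Wir_apply]; ring)

lemma HasW.mul {f g z af bf ag bg} (hf : HasW f z af bf) (hg : HasW g z ag bg) :
    HasW (fun w => f w * g w) z
      (fun i => f z * ag i + g z * af i) (fun i => f z * bg i + g z * bf i) :=
  hasW_of (HasFDerivAt.mul hf hg)
    (by intro v; simp [Wir_apply]; ring)

lemma HasW.neg {f z a b} (hf : HasW f z a b) :
    HasW (fun w => -(f w)) z (-a) (-b) :=
  hasW_of (HasFDerivAt.neg hf) (by intro v; simp [Wir_apply]; ring)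

lemma HasW.comp {f z a b} {φ : ℂ → ℂ} {d : ℂ} (hf : HasW f z a b)
    (hφ : HasDerivAt φ d (f z)) :
    HasW (fun w => φ (f w)) z (fun i => d * a i) (fun i => d * b i) :=
  hasW_of ((hφ.hasFDerivAt.restrictScalars ℝ).comp z hf)
    (by intro v; simp [Wir_apply]; ring)

lemma HasW.congr_ab {f z a b} (h : HasW f z a b) {a' b' : Fin 2 → ℂ}
    (ha : ∀ i, a' i = a i) (hb : ∀ i, b' i = b i) : HasW f z a' b' := by
  have h1 : a' = a := funext ha
  have h2 : b' = b := funext hb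
  rw [h1, h2]; exact h

lemma dz_congr {f g : (Fin 2 → ℂ) → ℂ} {z : Fin 2 → ℂ} (h : f =ᶠ[nhds z] g) (i : Fin 2) :
    dz i f z = dz i g z := by
  unfold dz; rw [h.fderiv_eq]

lemma dzbar_congr {f g : (Fin 2 → ℂ) → ℂ} {z : Fin 2 → ℂ} (h : f =ᶠ[nhds z] g) (i : Fin 2) :
    dzbar i f z = dzbar i g z := by
  unfold dzbar; rw [h.fderiv_eq]

/-- `S w = |w₀|² + |w₁|²` as a complex number. -/
def S (w : Fin 2 → ℂ) : ℂ :=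
  w 0 * (starRingEnd ℂ) (w 0) + w 1 * (starRingEnd ℂ) (w 1)

lemma S_eq (w : Fin 2 → ℂ) :
    S w = ((‖w 0‖ ^ 2 + ‖w 1‖ ^ 2 : ℝ) : ℂ) := by
  simp [S, Complex.mul_conj, Complex.sq_norm]

lemma S_re_pos {w : Fin 2 → ℂ} (hw : w ≠ 0) : 0 < (S w).re := by
  rw [S_eq, Complex.ofReal_re]
  by_contra h
  push_neg at h
  have h0 : ‖w 0‖ = 0 := by nlinarith [sq_nonneg ‖w 0‖, sq_nonneg ‖w 1‖, norm_nonneg (w 0), norm_nonneg (w 1)]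
  have h1 : ‖w 1‖ = 0 := by nlinarith [sq_nonneg ‖w 0‖, sq_nonneg ‖w 1‖, norm_nonneg (w 0), norm_nonneg (w 1)]
  apply hw
  funext i
  fin_cases i
  · exact norm_eq_zero.mp h0
  · exact norm_eq_zero.mp h1

lemma S_im (w : Fin 2 → ℂ) : (S w).im = 0 := by
  rw [S_eq]; exact Complex.ofReal_im _

lemma S_ne_zero {w : Fin 2 → ℂ} (hw : w ≠ 0) : S w ≠ 0 := by
  intro h
  have := S_re_pos hw
  rw [h] at this; simp at this

lemma S_slit {w : Fin 2 → ℂ} (hw : w ≠ 0) : S w ∈ Complex.slitPlane :=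
  Or.inl (S_re_pos hw)

lemma one_add_inv_S_re_pos {w : Fin 2 → ℂ} (hw : w ≠ 0) : 0 < (1 + (S w)⁻¹).re := by
  have h0 : 0 < (S w).re := S_re_pos hw
  rw [Complex.add_re, Complex.inv_re, Complex.one_re]
  have : 0 ≤ (S w).re / Complex.normSq (S w) :=
    div_nonneg h0.le (Complex.normSq_nonneg _)
  linarith

lemma one_add_inv_S_ne {w : Fin 2 → ℂ} (hw : w ≠ 0) : 1 + (S w)⁻¹ ≠ 0 := by
  intro h
  have := one_add_inv_S_re_pos hw
  rw [h] at this; simp at this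

lemma S_add_one_ne {w : Fin 2 → ℂ} (hw : w ≠ 0) : S w + 1 ≠ 0 := by
  intro h
  have h0 : 0 < (S w).re := S_re_pos hw
  have : (S w + 1).re = 0 := by rw [h]; simp
  rw [Complex.add_re, Complex.one_re] at this
  linarith

lemma one_add_inv_S_eq {w : Fin 2 → ℂ} (hw : w ≠ 0) :
    1 + (S w)⁻¹ = (S w + 1) * (S w)⁻¹ := by
  have hu : S w ≠ 0 := S_ne_zero hw
  field_simp

lemma one_add_inv_S_slit {w : Fin 2 → ℂ} (hw : w ≠ 0) :
    1 + (S w)⁻¹ ∈ Complex.slitPlane :=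
  Or.inl (one_add_inv_S_re_pos hw)

lemma hasW_S (w : Fin 2 → ℂ) :
    HasW S w (fun i => (starRingEnd ℂ) (w i)) (fun i => w i) := by
  have h := ((hasW_coord 0 w).mul (hasW_conj_coord 0 w)).add
    ((hasW_coord 1 w).mul (hasW_conj_coord 1 w))
  refine (h.congr_ab ?_ ?_) <;> intro i <;> fin_cases i <;>
    simp [Pi.single_apply, S]

/-- The Kähler metric `g_{i j̄} = ∂²Φ/∂zᵢ∂z̄ⱼ`. -/
def simancaMetric (z : Fin 2 → ℂ) : Matrix (Fin 2) (Fin 2) ℂ :=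
  fun i j => dz i (dzbar j simancaPotential) z

lemma potential_eq : simancaPotential = fun w => S w + Complex.log (S w) := by
  funext w
  rw [simancaPotential, S_eq]

lemma hasW_potential {w : Fin 2 → ℂ} (hw : w ≠ 0) :
    HasW simancaPotential w
      (fun i => (1 + (S w)⁻¹) * (starRingEnd ℂ) (w i))
      (fun i => (1 + (S w)⁻¹) * w i) := by
  rw [potential_eq]
  have h := (hasW_S w).add ((hasW_S w).comp (Complex.hasDerivAt_log (S_slit hw)))
  refine h.congr_ab ?_ ?_ <;> intro i <;> simp <;> ring

lemma dzbar_potential {w : Fin 2 → ℂ} (hw : w ≠ 0) (j : Fin 2) :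
    dzbar j simancaPotential w = (1 + (S w)⁻¹) * w j :=
  (hasW_potential hw).dzbar_eq j

lemma nhds_ne {w : Fin 2 → ℂ} (hw : w ≠ 0) : {v : Fin 2 → ℂ | v ≠ 0} ∈ nhds w :=
  isOpen_compl_singleton.mem_nhds hw

/-- `HasW` of the function `w ↦ ∂̄ⱼ Φ = (1 + S⁻¹) wⱼ`. -/
lemma hasW_dzbar_potential {w : Fin 2 → ℂ} (hw : w ≠ 0) (j : Fin 2) :
    HasW (fun v => (1 + (S v)⁻¹) * v j) w
      (fun i => (1 + (S w)⁻¹) * (Pi.single j 1 : Fin 2 → ℂ) i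
        + w j * (-((S w) ^ 2)⁻¹ * (starRingEnd ℂ) (w i)))
      (fun i => w j * (-((S w) ^ 2)⁻¹ * w i)) := by
  have hinv := (hasW_S w).comp (hasDerivAt_inv (S_ne_zero hw))
  have hone := ((hasW_const 1 w).add hinv)
  have h := hone.mul (hasW_coord j w)
  refine h.congr_ab ?_ ?_ <;> intro i <;> simp <;> ring

lemma metric_eq {w : Fin 2 → ℂ} (hw : w ≠ 0) (i j : Fin 2) :
    simancaMetric w i j = (1 + (S w)⁻¹) * (Pi.single j 1 : Fin 2 → ℂ) i
      - ((S w) ^ 2)⁻¹ * w j * (starRingEnd ℂ) (w i) := by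
  rw [simancaMetric]
  have hev : (dzbar j simancaPotential) =ᶠ[nhds w] (fun v => (1 + (S v)⁻¹) * v j) := by
    filter_upwards [nhds_ne hw] with v hv
    exact dzbar_potential hv j
  rw [dz_congr hev i, (hasW_dzbar_potential hw j).dz_eq i]
  ring

lemma det_alg (u a b : ℂ) (hu : u ≠ 0) (hab : a + b = u) :
    (1 + u⁻¹ - (u ^ 2)⁻¹ * a) * (1 + u⁻¹ - (u ^ 2)⁻¹ * b)
      - (u ^ 2)⁻¹ * (u ^ 2)⁻¹ * (a * b) = 1 + u⁻¹ := by
  have ha : a = u - b := by linear_combination hab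
  subst ha
  have h10 : u ^ 10 * u⁻¹ ^ 10 = 1 := by
    rw [← mul_pow, mul_inv_cancel₀ hu, one_pow]
  field_simp
  linear_combination 0 * h10

lemma det_metric {w : Fin 2 → ℂ} (hw : w ≠ 0) :
    (simancaMetric w).det = 1 + (S w)⁻¹ := by
  have hu : S w ≠ 0 := S_ne_zero hw
  rw [Matrix.det_fin_two, metric_eq hw 0 0, metric_eq hw 0 1, metric_eq hw 1 0,
    metric_eq hw 1 1]
  simp only [Pi.single_apply]
  norm_num
  have h := det_alg (S w) (w 0 * (starRingEnd ℂ) (w 0)) (w 1 * (starRingEnd ℂ) (w 1))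
    hu rfl
  linear_combination h

lemma hasW_log_one_add_inv {w : Fin 2 → ℂ} (hw : w ≠ 0) :
    HasW (fun v => Complex.log (1 + (S v)⁻¹)) w
      (fun i => (1 + (S w)⁻¹)⁻¹ * (-((S w) ^ 2)⁻¹ * (starRingEnd ℂ) (w i)))
      (fun i => (1 + (S w)⁻¹)⁻¹ * (-((S w) ^ 2)⁻¹ * w i)) := by
  have hinv := (hasW_S w).comp (hasDerivAt_inv (S_ne_zero hw))
  have hone := (hasW_const 1 w).add hinv
  have h := hone.comp (Complex.hasDerivAt_log (one_add_inv_S_slit hw))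
  refine h.congr_ab ?_ ?_ <;> intro i <;> simp <;> ring

lemma dzbar_logdet {w : Fin 2 → ℂ} (hw : w ≠ 0) (j : Fin 2) :
    dzbar j (fun v => Complex.log (simancaMetric v).det) w
      = (1 + (S w)⁻¹)⁻¹ * (-((S w) ^ 2)⁻¹ * w j) := by
  have hev : (fun v => Complex.log (simancaMetric v).det)
      =ᶠ[nhds w] (fun v => Complex.log (1 + (S v)⁻¹)) := by
    filter_upwards [nhds_ne hw] with v hv
    rw [det_metric hv]
  rw [dzbar_congr hev j]
  exact (hasW_log_one_add_inv hw).dzbar_eq j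

lemma hasW_q {w : Fin 2 → ℂ} (hw : w ≠ 0) :
    HasW (fun v => (1 + (S v)⁻¹)⁻¹) w
      (fun i => ((1 + (S w)⁻¹) ^ 2 * (S w) ^ 2)⁻¹ * (starRingEnd ℂ) (w i))
      (fun i => ((1 + (S w)⁻¹) ^ 2 * (S w) ^ 2)⁻¹ * w i) := by
  have hu : S w ≠ 0 := S_ne_zero hw
  have hc : 1 + (S w)⁻¹ ≠ 0 := one_add_inv_S_ne hw
  have hinv := (hasW_S w).comp (hasDerivAt_inv hu)
  have hone := (hasW_const 1 w).add hinv
  have h := hone.comp (hasDerivAt_inv hc)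
  refine h.congr_ab ?_ ?_ <;> intro i <;>
    simp only [Pi.add_apply, Pi.zero_apply, zero_add] <;>
    field_simp <;>
    rw [mul_comm ((S w + 1) ^ 2) (S w ^ 2), mul_div_mul_left _ _ (pow_ne_zero 2 hu)]

lemma hasW_n {w : Fin 2 → ℂ} (hw : w ≠ 0) :
    HasW (fun v => -((S v) ^ 2)⁻¹) w
      (fun i => 2 * ((S w) ^ 3)⁻¹ * (starRingEnd ℂ) (w i))
      (fun i => 2 * ((S w) ^ 3)⁻¹ * w i) := by
  have hu : S w ≠ 0 := S_ne_zero hw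
  have hd : HasDerivAt (fun x : ℂ => (x ^ 2)⁻¹) (-(2 * S w) / (S w ^ 2) ^ 2) (S w) := by
    exact ((hasDerivAt_pow 2 (S w)).inv (pow_ne_zero 2 hu)).congr_deriv (by norm_num)
  have h := ((hasW_S w).comp hd).neg
  refine h.congr_ab ?_ ?_ <;> intro i <;>
    simp only [Pi.neg_apply] <;> field_simp <;> ring

lemma hasW_phi {w : Fin 2 → ℂ} (hw : w ≠ 0) (j : Fin 2) :
    HasW (fun v => (1 + (S v)⁻¹)⁻¹ * (-((S v) ^ 2)⁻¹ * v j)) w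
      (fun i => -(((1 + (S w)⁻¹) * (S w) ^ 2)⁻¹) * (Pi.single j 1 : Fin 2 → ℂ) i
        + (starRingEnd ℂ) (w i) * w j
          * (2 * ((1 + (S w)⁻¹) * (S w) ^ 3)⁻¹ - ((1 + (S w)⁻¹) ^ 2 * (S w) ^ 4)⁻¹))
      (fun i => w i * w j
          * (2 * ((1 + (S w)⁻¹) * (S w) ^ 3)⁻¹ - ((1 + (S w)⁻¹) ^ 2 * (S w) ^ 4)⁻¹)) := by
  have hu : S w ≠ 0 := S_ne_zero hw
  have hc : 1 + (S w)⁻¹ ≠ 0 := one_add_inv_S_ne hw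
  have h1 : S w + 1 ≠ 0 := S_add_one_ne hw
  have hr := (hasW_n hw).mul (hasW_coord j w)
  have h := (hasW_q hw).mul hr
  refine h.congr_ab ?_ ?_ <;> intro i
  · simp only [Pi.single_apply, Pi.zero_apply, mul_zero, add_zero, zero_add,
      mul_one]
    rw [one_add_inv_S_eq hw]
    set T := S w + 1 with hT
    clear_value T
    split_ifs <;> field_simp [hu, h1] <;> ring
  · simp only [Pi.single_apply, Pi.zero_apply, mul_zero, add_zero, zero_add,
      mul_one]
    rw [one_add_inv_S_eq hw]
    set T := S w + 1 with hT
    clear_value T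
    field_simp [hu, h1]
    ring

lemma dz_dzbar_logdet {z : Fin 2 → ℂ} (hz : z ≠ 0) (i j : Fin 2) :
    dz i (dzbar j (fun w => Complex.log (simancaMetric w).det)) z
      = -(((1 + (S z)⁻¹) * (S z) ^ 2)⁻¹) * (Pi.single j 1 : Fin 2 → ℂ) i
        + (starRingEnd ℂ) (z i) * z j
          * (2 * ((1 + (S z)⁻¹) * (S z) ^ 3)⁻¹ - ((1 + (S z)⁻¹) ^ 2 * (S z) ^ 4)⁻¹) := by
  have hev : (dzbar j (fun v => Complex.log (simancaMetric v).det))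
      =ᶠ[nhds z] (fun v => (1 + (S v)⁻¹)⁻¹ * (-((S v) ^ 2)⁻¹ * v j)) := by
    filter_upwards [nhds_ne hz] with v hv
    exact dzbar_logdet hv j
  rw [dz_congr hev i]
  exact (hasW_phi hz j).dz_eq i

/-- The scalar curvature `ρ = -Σ g^{j̄ i} ∂²(log det g)/∂zᵢ∂z̄ⱼ`. -/
def simancaScalar (z : Fin 2 → ℂ) : ℂ :=
  -∑ i : Fin 2, ∑ j : Fin 2,
    (simancaMetric z)⁻¹ j i
      * dz i (dzbar j (fun w => Complex.log (simancaMetric w).det)) z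

lemma final_alg (u a b m : ℂ) (hu : u ≠ 0) (h1 : u + 1 ≠ 0)
    (hab : a + b = u) (hm : m = a * b) :
    -( ((1 + u⁻¹)⁻¹ * ((1 + u⁻¹) - (u ^ 2)⁻¹ * b))
        * (-(((1 + u⁻¹) * u ^ 2)⁻¹)
           + a * (2 * ((1 + u⁻¹) * u ^ 3)⁻¹ - ((1 + u⁻¹) ^ 2 * u ^ 4)⁻¹))
      + (1 + u⁻¹)⁻¹ * (u ^ 2)⁻¹ * m
          * (2 * ((1 + u⁻¹) * u ^ 3)⁻¹ - ((1 + u⁻¹) ^ 2 * u ^ 4)⁻¹)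
      + (1 + u⁻¹)⁻¹ * (u ^ 2)⁻¹ * m
          * (2 * ((1 + u⁻¹) * u ^ 3)⁻¹ - ((1 + u⁻¹) ^ 2 * u ^ 4)⁻¹)
      + ((1 + u⁻¹)⁻¹ * ((1 + u⁻¹) - (u ^ 2)⁻¹ * a))
        * (-(((1 + u⁻¹) * u ^ 2)⁻¹)
           + b * (2 * ((1 + u⁻¹) * u ^ 3)⁻¹ - ((1 + u⁻¹) ^ 2 * u ^ 4)⁻¹)) ) = 0 := by
  have hb : b = u - a := by linear_combination hab
  subst hb
  subst hm
  have hcne : (1 : ℂ) + u⁻¹ ≠ 0 := by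
    rw [show (1 : ℂ) + u⁻¹ = (u + 1) * u⁻¹ by field_simp]
    exact mul_ne_zero h1 (inv_ne_zero hu)
  have hV : u * u⁻¹ = 1 := mul_inv_cancel₀ hu
  have hT : (1 + u⁻¹) * (1 + u⁻¹)⁻¹ = 1 := mul_inv_cancel₀ hcne
  have hX2 : ((1 + u⁻¹) * u ^ 2)⁻¹ = (1 + u⁻¹)⁻¹ * u⁻¹ ^ 2 := by
    rw [mul_inv, inv_pow]
  have hX3 : ((1 + u⁻¹) * u ^ 3)⁻¹ = (1 + u⁻¹)⁻¹ * u⁻¹ ^ 3 := by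
    rw [mul_inv, inv_pow]
  have hX4 : ((1 + u⁻¹) ^ 2 * u ^ 4)⁻¹ = (1 + u⁻¹)⁻¹ ^ 2 * u⁻¹ ^ 4 := by
    rw [mul_inv, inv_pow, inv_pow]
  linear_combination
    ((2) * (1 + u⁻¹)⁻¹ + (2) * u⁻¹ * (1 + u⁻¹)⁻¹ + (-1) * u * u⁻¹ ^ 2 * (1 + u⁻¹)⁻¹) * hX2
    + ((-2) * u * (1 + u⁻¹)⁻¹ + (-2) * u * u⁻¹ * (1 + u⁻¹)⁻¹) * hX3
    + ((1) * u * (1 + u⁻¹)⁻¹ + (1) * u * u⁻¹ * (1 + u⁻¹)⁻¹) * hX4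
    + ((-2) * u⁻¹ ^ 2 * (1 + u⁻¹)⁻¹ ^ 2 + (-3) * u⁻¹ ^ 3 * (1 + u⁻¹)⁻¹ ^ 2
       + (1) * u⁻¹ ^ 3 * (1 + u⁻¹)⁻¹ ^ 3 + (1) * u⁻¹ ^ 4 * (1 + u⁻¹)⁻¹ ^ 3) * hV
    + ((1) * u⁻¹ ^ 3 * (1 + u⁻¹)⁻¹ ^ 2) * hT

/-- Simanca's metric on `ℂ² \ {0}` with potential `Φ = |z|² + log |z|²` has
zero scalar curvature. -/
theorem stmt8 (z : Fin 2 → ℂ) (hz : z ≠ 0) : simancaScalar z = 0 := by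
  have hu : S z ≠ 0 := S_ne_zero hz
  have h1 : S z + 1 ≠ 0 := S_add_one_ne hz
  have hc : 1 + (S z)⁻¹ ≠ 0 := one_add_inv_S_ne hz
  have hdet : (simancaMetric z).det = 1 + (S z)⁻¹ := det_metric hz
  have hinv : (simancaMetric z)⁻¹
      = (1 + (S z)⁻¹)⁻¹ • !![simancaMetric z 1 1, -(simancaMetric z 0 1);
          -(simancaMetric z 1 0), simancaMetric z 0 0] := by
    rw [Matrix.inv_def, Matrix.adjugate_fin_two, hdet, Ring.inverse_eq_inv']
  have i00 : (simancaMetric z)⁻¹ 0 0 = (1 + (S z)⁻¹)⁻¹ * simancaMetric z 1 1 := by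
    rw [hinv]; simp
  have i01 : (simancaMetric z)⁻¹ 0 1 = (1 + (S z)⁻¹)⁻¹ * -(simancaMetric z 0 1) := by
    rw [hinv]; simp
  have i10 : (simancaMetric z)⁻¹ 1 0 = (1 + (S z)⁻¹)⁻¹ * -(simancaMetric z 1 0) := by
    rw [hinv]; simp
  have i11 : (simancaMetric z)⁻¹ 1 1 = (1 + (S z)⁻¹)⁻¹ * simancaMetric z 0 0 := by
    rw [hinv]; simp
  rw [simancaScalar]
  simp only [Fin.sum_univ_two]
  rw [dz_dzbar_logdet hz 0 0, dz_dzbar_logdet hz 0 1, dz_dzbar_logdet hz 1 0,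
    dz_dzbar_logdet hz 1 1, i00, i01, i10, i11,
    metric_eq hz 0 0, metric_eq hz 0 1, metric_eq hz 1 0, metric_eq hz 1 1]
  simp only [Pi.single_eq_same, Pi.single_eq_of_ne (by decide : (0 : Fin 2) ≠ 1),
    Pi.single_eq_of_ne (by decide : (1 : Fin 2) ≠ 0), mul_one, mul_zero]
  have key := final_alg (S z) (z 0 * (starRingEnd ℂ) (z 0)) (z 1 * (starRingEnd ℂ) (z 1))
    ((z 0 * (starRingEnd ℂ) (z 0)) * (z 1 * (starRingEnd ℂ) (z 1))) hu h1 rfl rfl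
  linear_combination key


end
end
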